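/- Let the action of G on (X, μ) be ergodic, let L be a representation of X⋊G on a separable complex Hilbert space K, and let b be an L-cocycle. Then the following are equivalent: (i) b is an L-coboundary; (ii) there exists a measurable E ⊆ X with μ(E) > 0 such that sup{ ‖b(x,g)‖ : g ∈ G, x ∈ E, g⁻¹•x ∈ E } < ∞; (iii) there exists a measurable E ⊆ X with μ(E) > 0 such that for every x ∈ E, sup{ ‖b(x,g)‖ : g ∈ G, g⁻¹•x ∈ E } < ∞. -/

import Mathlib

open MeasureTheory Filter Topology
open scoped Pointwise symmDiff InnerProductSpace ENNReal

section Defs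

variable (G : Type*) {X : Type*} [Group G] [MulAction G X] [MeasurableSpace X]

/-- The action of `G` on `X` is measurable and the measure `μ` is quasi-invariant:
for every `g`, the pushforward of `μ` under `x ↦ g • x` is equivalent to `μ`. -/
def QuasiInvariantAction (μ : Measure X) : Prop :=
  (∀ g : G, Measurable fun x : X => g • x) ∧
    ∀ g : G, μ.map (fun x : X => g • x) ≪ μ ∧ μ ≪ μ.map (fun x : X => g • x)

/-- Ergodicity of the action: every measurable `A` with `μ((g • A) ∆ A) = 0` for all `g`
is null or conull. -/
def IsErgodicSMulAction (μ : Measure X) : Prop :=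
  ∀ A : Set X, MeasurableSet A → (∀ g : G, μ ((g • A) ∆ A) = 0) → μ A = 0 ∨ μ A = 1

variable {G}
variable {K : Type*} [NormedAddCommGroup K] [InnerProductSpace ℂ K]
  [MeasurableSpace K] [BorelSpace K]

/-- A representation of the action groupoid `X ⋊ G` on the Hilbert space `K`. -/
def IsGroupoidRep (μ : Measure X) (L : X → G → (K ≃ₗᵢ[ℂ] K)) : Prop :=
  (∀ (g : G) (v : K), Measurable fun x : X => L x g v) ∧
    ∀ g₁ g₂ : G, ∀ᵐ x ∂μ, ∀ v : K, L x (g₁ * g₂) v = L x g₁ (L (g₁⁻¹ • x) g₂ v)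

/-- An `L`-cocycle. -/
def IsLCocycle (μ : Measure X) (L : X → G → (K ≃ₗᵢ[ℂ] K)) (b : X → G → K) : Prop :=
  (∀ g : G, Measurable fun x : X => b x g) ∧
    ∀ g₁ g₂ : G, ∀ᵐ x ∂μ, b x (g₁ * g₂) = b x g₁ + L x g₁ (b (g₁⁻¹ • x) g₂)

/-- An `L`-coboundary. -/
def IsLCoboundary (μ : Measure X) (L : X → G → (K ≃ₗᵢ[ℂ] K)) (b : X → G → K) : Prop :=
  ∃ ξ : X → K, Measurable ξ ∧ ∀ g : G, ∀ᵐ x ∂μ, b x g = ξ x - L x g (ξ (g⁻¹ • x))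

/-- A unit section: a measurable map `ξ : X → K` of norm one almost everywhere. -/
def IsUnitSection (μ : Measure X) (ξ : X → K) : Prop :=
  Measurable ξ ∧ ∀ᵐ x ∂μ, ‖ξ x‖ = 1

/-- The representation `L` has an invariant unit section. -/
def HasInvariantUnitSection (μ : Measure X) (L : X → G → (K ≃ₗᵢ[ℂ] K)) : Prop :=
  ∃ ξ : X → K, IsUnitSection μ ξ ∧ ∀ g : G, ∀ᵐ x ∂μ, L x g (ξ (g⁻¹ • x)) = ξ x

/-- The representation `L` almost has invariant unit sections. -/
def AlmostHasInvariantUnitSections (μ : Measure X) (L : X → G → (K ≃ₗᵢ[ℂ] K)) : Prop :=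
  ∃ ξ : ℕ → X → K, (∀ n, IsUnitSection μ (ξ n)) ∧
    ∀ g : G, ∀ᵐ x ∂μ,
      Tendsto (fun n => ‖L x g (ξ n (g⁻¹ • x)) - ξ n x‖) atTop (𝓝 0)

variable (G)

/-- Property (T) for the action of `G` on `(X, μ)`: every representation of `X ⋊ G`
on a separable complex Hilbert space that almost has invariant unit sections has an
invariant unit section. -/
def ActionHasPropertyT (μ : Measure X) : Prop :=
  ∀ (K : Type) [NormedAddCommGroup K] [InnerProductSpace ℂ K]
    [CompleteSpace K] [SecondCountableTopology K]
    [MeasurableSpace K] [BorelSpace K]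
    (L : X → G → (K ≃ₗᵢ[ℂ] K)),
    IsGroupoidRep μ L → AlmostHasInvariantUnitSections μ L → HasInvariantUnitSection μ L

end Defs

section AuxCob
open Set
set_option linter.unusedSectionVars false

section MeasAux

variable {X K K' : Type*} [MeasurableSpace X] [MeasurableSpace K] [MeasurableSpace K']

lemma meas_nat_select {F : ℕ → X → K} (hF : ∀ n, Measurable (F n)) {N : X → ℕ}
    (hN : Measurable N) : Measurable fun x => F (N x) x := by
  intro t ht
  have h : (fun x => F (N x) x) ⁻¹' t = ⋃ n, (N ⁻¹' {n}) ∩ (F n ⁻¹' t) := by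
    ext x
    simp only [mem_preimage, mem_iUnion, mem_inter_iff, mem_singleton_iff]
    constructor
    · intro hx; exact ⟨N x, rfl, hx⟩
    · rintro ⟨n, hn, hx⟩; rwa [hn]
  rw [h]
  exact MeasurableSet.iUnion fun n => (hN (measurableSet_singleton n)).inter (hF n ht)

lemma meas_nat_find {p : X → ℕ → Prop} [∀ x n, Decidable (p x n)]
    (hp : ∀ n, MeasurableSet {x | p x n}) (h : ∀ x, ∃ n, p x n) :
    Measurable fun x => Nat.find (h x) := by
  apply measurable_to_countable'
  intro n
  have hs : (fun x => Nat.find (h x)) ⁻¹' {n}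
      = {x | p x n} ∩ ⋂ m ∈ Finset.range n, {x | p x m}ᶜ := by
    ext x
    simp only [mem_preimage, mem_singleton_iff, Nat.find_eq_iff, mem_inter_iff, mem_iInter,
      Finset.mem_range, mem_compl_iff, mem_setOf_eq]
  rw [hs]
  exact (hp n).inter (MeasurableSet.biInter (Set.to_countable _)
    fun m _ => (hp m).compl)

lemma meas_comp_countable_range [MeasurableSingletonClass K] {F : X → K → K'}
    (hF : ∀ v, Measurable fun x => F x v) {s : X → K} (hs : Measurable s)
    (hcr : (Set.range s).Countable) : Measurable fun x => F x (s x) := by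
  intro t ht
  have h : (fun x => F x (s x)) ⁻¹' t
      = ⋃ v ∈ Set.range s, (s ⁻¹' {v}) ∩ ((fun x => F x v) ⁻¹' t) := by
    ext x
    simp only [mem_preimage, mem_iUnion, mem_inter_iff, mem_singleton_iff, exists_prop]
    constructor
    · intro hx; exact ⟨s x, ⟨x, rfl⟩, rfl, hx⟩
    · rintro ⟨v, _, hv, hx⟩; rwa [hv]
  rw [h]
  exact MeasurableSet.biUnion hcr fun v _ => (hs (measurableSet_singleton v)).inter (hF v ht)

end MeasAux

section LComp

variable {X K : Type*} [MeasurableSpace X] [NormedAddCommGroup K] [InnerProductSpace ℂ K]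
  [MeasurableSpace K] [BorelSpace K] [SecondCountableTopology K]

lemma meas_L_comp (T : X → (K ≃ₗᵢ[ℂ] K)) (hT : ∀ v, Measurable fun x => T x v)
    {φ : X → K} (hφ : Measurable φ) : Measurable fun x => T x (φ x) := by
  have h0 : (0 : K) ∈ (Set.univ : Set K) := Set.mem_univ 0
  have : ∀ n, Measurable fun x => T x (SimpleFunc.approxOn φ hφ Set.univ 0 h0 n x) := by
    intro n
    exact meas_comp_countable_range (fun v => hT v)
      (SimpleFunc.approxOn φ hφ Set.univ 0 h0 n).measurable
      (SimpleFunc.approxOn φ hφ Set.univ 0 h0 n).finite_range.countable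
  apply measurable_of_tendsto_metrizable this
  rw [tendsto_pi_nhds]
  intro x
  have h1 : Tendsto (fun n => SimpleFunc.approxOn φ hφ Set.univ 0 h0 n x) atTop (𝓝 (φ x)) :=
    SimpleFunc.tendsto_approxOn hφ h0 (by simp)
  exact ((T x).continuous.tendsto _).comp h1

end LComp

section Cheb

variable {K : Type*} [NormedAddCommGroup K] [InnerProductSpace ℂ K]
variable {ι : Type*} [Nonempty ι] {f : ι → K} {C : ℝ} {d : ℕ → K}

lemma chebR_bdd (hf : ∀ i, ‖f i‖ ≤ C) (z : K) :
    BddAbove (Set.range fun i => ‖z - f i‖) := by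
  refine ⟨‖z‖ + C, ?_⟩
  rintro _ ⟨i, rfl⟩
  calc ‖z - f i‖ ≤ ‖z‖ + ‖f i‖ := norm_sub_le _ _
    _ ≤ ‖z‖ + C := by linarith [hf i]

lemma le_chebR (hf : ∀ i, ‖f i‖ ≤ C) (z : K) (i : ι) :
    ‖z - f i‖ ≤ ⨆ j, ‖z - f j‖ :=
  le_ciSup (chebR_bdd hf z) i

lemma chebR_nonneg (hf : ∀ i, ‖f i‖ ≤ C) (z : K) : 0 ≤ ⨆ j, ‖z - f j‖ :=
  le_trans (norm_nonneg _) (le_chebR hf z (Classical.arbitrary ι))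

lemma chebρ_le_chebR (hd : DenseRange d) (hf : ∀ i, ‖f i‖ ≤ C) (z : K) :
    (⨅ k, ⨆ j, ‖d k - f j‖) ≤ ⨆ j, ‖z - f j‖ := by
  refine le_of_forall_pos_le_add fun ε hε => ?_
  obtain ⟨k, hk⟩ : ∃ k, dist (d k) z < ε := by
    obtain ⟨k, hk⟩ := hd.exists_dist_lt z hε
    exact ⟨k, by rwa [dist_comm]⟩
  have h1 : (⨅ k, ⨆ j, ‖d k - f j‖) ≤ ⨆ j, ‖d k - f j‖ :=
    ciInf_le ⟨0, by rintro _ ⟨m, rfl⟩; exact chebR_nonneg hf _⟩ k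
  refine h1.trans (ciSup_le fun j => ?_)
  have : ‖d k - f j‖ ≤ ‖d k - z‖ + ‖z - f j‖ := by
    have := norm_sub_le_norm_sub_add_norm_sub (d k) z (f j)
    linarith
  have hdz : ‖d k - z‖ ≤ ε := by rw [← dist_eq_norm]; linarith
  have h2 := le_chebR hf z j
  linarith

lemma chebρ_nonneg (hf : ∀ i, ‖f i‖ ≤ C) : 0 ≤ ⨅ k, ⨆ j, ‖d k - f j‖ :=
  le_ciInf fun k => chebR_nonneg hf _

lemma cheb_key (hd : DenseRange d) (hf : ∀ i, ‖f i‖ ≤ C) {z z' : K} {ε : ℝ} (hε : 0 ≤ ε)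
    (hz : (⨆ j, ‖z - f j‖) ≤ (⨅ k, ⨆ j, ‖d k - f j‖) + ε)
    (hz' : (⨆ j, ‖z' - f j‖) ≤ (⨅ k, ⨆ j, ‖d k - f j‖) + ε) :
    ‖z - z'‖ ^ 2 ≤ 4 * ε * (2 * (⨅ k, ⨆ j, ‖d k - f j‖) + ε) := by
  set ρ : ℝ := ⨅ k, ⨆ j, ‖d k - f j‖ with hρ
  have hρ0 : 0 ≤ ρ := chebρ_nonneg hf
  set m : K := (2 : ℂ)⁻¹ • (z + z') with hm
  have par : ∀ i, 4 * ‖m - f i‖ ^ 2 + ‖z - z'‖ ^ 2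
      = 2 * ‖z - f i‖ ^ 2 + 2 * ‖z' - f i‖ ^ 2 := by
    intro i
    have hpar := parallelogram_law_with_norm ℂ (z - f i) (z' - f i)
    have hsum : (z - f i) + (z' - f i) = (2 : ℂ) • (m - f i) := by
      rw [hm, smul_sub, smul_smul]
      norm_num
      module
    have hdiff : (z - f i) - (z' - f i) = z - z' := by abel
    rw [hsum, hdiff, norm_smul] at hpar
    have h2 : ‖(2 : ℂ)‖ = 2 := by simp
    rw [h2] at hpar
    nlinarith [hpar]
  have hzb : ∀ i, ‖z - f i‖ ≤ ρ + ε := fun i => (le_chebR hf z i).trans hz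
  have hzb' : ∀ i, ‖z' - f i‖ ≤ ρ + ε := fun i => (le_chebR hf z' i).trans hz'
  set M : ℝ := (ρ + ε) ^ 2 - ‖z - z'‖ ^ 2 / 4 with hM
  have hMi : ∀ i, ‖m - f i‖ ^ 2 ≤ M := by
    intro i
    have hp := par i
    have h1 := hzb i
    have h2 := hzb' i
    rw [hM]
    nlinarith [norm_nonneg (z - f i), norm_nonneg (z' - f i), norm_nonneg (m - f i)]
  have hM0 : 0 ≤ M := le_trans (sq_nonneg _) (hMi (Classical.arbitrary ι))
  have hRm : (⨆ j, ‖m - f j‖) ≤ Real.sqrt M := by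
    refine ciSup_le fun i => ?_
    rw [← Real.sqrt_sq (norm_nonneg (m - f i))]
    exact Real.sqrt_le_sqrt (hMi i)
  have hρm : ρ ≤ Real.sqrt M := (chebρ_le_chebR hd hf m).trans hRm
  have hρ2 : ρ ^ 2 ≤ M := by
    calc ρ ^ 2 ≤ Real.sqrt M ^ 2 := pow_le_pow_left₀ hρ0 hρm 2
      _ = M := Real.sq_sqrt hM0
  rw [hM] at hρ2
  nlinarith [hρ2]

lemma cheb_unique (hd : DenseRange d) (hf : ∀ i, ‖f i‖ ≤ C) {z z' : K}
    (hz : (⨆ j, ‖z - f j‖) ≤ ⨅ k, ⨆ j, ‖d k - f j‖)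
    (hz' : (⨆ j, ‖z' - f j‖) ≤ ⨅ k, ⨆ j, ‖d k - f j‖) : z = z' := by
  set ρ : ℝ := ⨅ k, ⨆ j, ‖d k - f j‖ with hρ
  have key : ∀ ε : ℝ, 0 < ε → ‖z - z'‖ ^ 2 ≤ 4 * ε * (2 * ρ + ε) := by
    intro ε hε
    exact cheb_key hd hf hε.le (hz.trans (by linarith)) (hz'.trans (by linarith))
  have h0 : ‖z - z'‖ ^ 2 ≤ 0 := by
    have hc : Tendsto (fun ε : ℝ => 4 * ε * (2 * ρ + ε)) (𝓝[>] 0) (𝓝 0) := by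
      have : Tendsto (fun ε : ℝ => 4 * ε * (2 * ρ + ε)) (𝓝 0) (𝓝 (4 * 0 * (2 * ρ + 0))) := by
        exact (by continuity : Continuous fun ε : ℝ => 4 * ε * (2 * ρ + ε)).tendsto 0
      simpa using this.mono_left nhdsWithin_le_nhds
    refine ge_of_tendsto hc ?_
    filter_upwards [self_mem_nhdsWithin] with ε hε
    exact key ε hε
  have : ‖z - z'‖ = 0 := by nlinarith [norm_nonneg (z - z'), sq_nonneg (‖z - z'‖)]
  rwa [norm_sub_eq_zero_iff] at this

end Cheb

end AuxCob

set_option maxHeartbeats 1000000 in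
/-- For an ergodic quasi-invariant action of a countable discrete group `G` on a standard
Borel probability space `(X, μ)`, a representation `L` of `X ⋊ G` on a separable complex
Hilbert space and an `L`-cocycle `b`, the following are equivalent:
(i) `b` is an `L`-coboundary;
(ii) there is a positive-measure measurable `E ⊆ X` with
`sup { ‖b(x,g)‖ : g ∈ G, x ∈ E, g⁻¹ • x ∈ E } < ∞`;
(iii) there is a positive-measure measurable `E ⊆ X` such that for every `x ∈ E`,
`sup { ‖b(x,g)‖ : g ∈ G, g⁻¹ • x ∈ E } < ∞`. -/
theorem coboundary_tfae
    {G X : Type*} [Group G] [Countable G]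
    [MeasurableSpace X] [StandardBorelSpace X] [MulAction G X]
    (μ : Measure X) [IsProbabilityMeasure μ]
    (hqi : QuasiInvariantAction G μ) (herg : IsErgodicSMulAction G μ)
    {K : Type*} [NormedAddCommGroup K] [InnerProductSpace ℂ K]
    [CompleteSpace K] [SecondCountableTopology K] [MeasurableSpace K] [BorelSpace K]
    (L : X → G → (K ≃ₗᵢ[ℂ] K)) (hL : IsGroupoidRep μ L)
    (b : X → G → K) (hb : IsLCocycle μ L b) :
    List.TFAE
      [IsLCoboundary μ L b,
       ∃ E : Set X, MeasurableSet E ∧ 0 < μ E ∧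
         ∃ C : ℝ, ∀ x ∈ E, ∀ g : G, g⁻¹ • x ∈ E → ‖b x g‖ ≤ C,
       ∃ E : Set X, MeasurableSet E ∧ 0 < μ E ∧
         ∀ x ∈ E, ∃ C : ℝ, ∀ g : G, g⁻¹ • x ∈ E → ‖b x g‖ ≤ C] := by
  classical
  have hmeas := hqi.1
  -- transporting a.e. statements along the action
  have hae_smul : ∀ (g : G) (p : X → Prop), (∀ᵐ x ∂μ, p x) → ∀ᵐ x ∂μ, p (g • x) := by
    intro g p hp
    have h1 : ∀ᵐ y ∂(μ.map fun x : X => g • x), p y := (hqi.2 g).1.ae_le hp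
    exact ae_of_ae_map (hmeas g).aemeasurable h1
  tfae_have 1 → 2 := by
    rintro ⟨ξ, hξm, hξ⟩
    have hAg : ∀ g : G, MeasurableSet {x | b x g = ξ x - L x g (ξ (g⁻¹ • x))} := by
      intro g
      have hR : Measurable fun x => ξ x - L x g (ξ (g⁻¹ • x)) :=
        hξm.sub (meas_L_comp (fun x => L x g) (hL.1 g) (hξm.comp (hmeas g⁻¹)))
      have : {x | b x g = ξ x - L x g (ξ (g⁻¹ • x))}
          = (fun x => b x g - (ξ x - L x g (ξ (g⁻¹ • x)))) ⁻¹' {0} := by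
        ext x; simp [sub_eq_zero]
      rw [this]
      exact ((hb.1 g).sub hR) (measurableSet_singleton 0)
    obtain ⟨N, hN⟩ : ∃ N : ℕ, μ {x | ‖ξ x‖ ≤ (N : ℝ)} ≠ 0 := by
      by_contra h
      push_neg at h
      have hcover : (⋃ N : ℕ, {x | ‖ξ x‖ ≤ (N : ℝ)}) = Set.univ := by
        ext x
        simp only [Set.mem_iUnion, Set.mem_setOf_eq, Set.mem_univ, iff_true]
        exact exists_nat_ge ‖ξ x‖
      have := measure_iUnion_null h
      rw [hcover, measure_univ] at this
      simp at this
    set A : Set X := ⋂ g : G, {x | b x g = ξ x - L x g (ξ (g⁻¹ • x))} with hAdef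
    have hAae : ∀ᵐ x ∂μ, x ∈ A := by
      rw [hAdef]
      simp only [Set.mem_iInter, Set.mem_setOf_eq]
      exact ae_all_iff.2 fun g => hξ g
    refine ⟨{x | ‖ξ x‖ ≤ (N : ℝ)} ∩ A, ?_, ?_, 2 * N, ?_⟩
    · exact (measurableSet_le hξm.norm measurable_const).inter
        (MeasurableSet.iInter fun g => hAg g)
    · have hsub : {x | ‖ξ x‖ ≤ (N : ℝ)} ⊆ ({x | ‖ξ x‖ ≤ (N : ℝ)} ∩ A) ∪ Aᶜ := by
        intro x hx
        by_cases hA : x ∈ A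
        · exact Or.inl ⟨hx, hA⟩
        · exact Or.inr hA
      have hAc : μ Aᶜ = 0 := by
        have := ae_iff.1 hAae
        exact this
      have hle : μ {x | ‖ξ x‖ ≤ (N : ℝ)} ≤ μ ({x | ‖ξ x‖ ≤ (N : ℝ)} ∩ A) := by
        calc μ {x | ‖ξ x‖ ≤ (N : ℝ)} ≤ μ (({x | ‖ξ x‖ ≤ (N : ℝ)} ∩ A) ∪ Aᶜ) :=
              measure_mono hsub
          _ ≤ μ ({x | ‖ξ x‖ ≤ (N : ℝ)} ∩ A) + μ Aᶜ := measure_union_le _ _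
          _ = μ ({x | ‖ξ x‖ ≤ (N : ℝ)} ∩ A) := by rw [hAc, add_zero]
      refine pos_iff_ne_zero.2 fun h0 => hN ?_
      rw [h0] at hle
      exact le_antisymm hle zero_le
    · rintro x ⟨hx1, hx2⟩ g ⟨hy1, hy2⟩
      have heq : b x g = ξ x - L x g (ξ (g⁻¹ • x)) := by
        have := Set.mem_iInter.1 hx2 g
        exact this
      rw [heq]
      calc ‖ξ x - L x g (ξ (g⁻¹ • x))‖ ≤ ‖ξ x‖ + ‖L x g (ξ (g⁻¹ • x))‖ := norm_sub_le _ _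
        _ = ‖ξ x‖ + ‖ξ (g⁻¹ • x)‖ := by rw [LinearIsometryEquiv.norm_map]
        _ ≤ N + N := add_le_add hx1 hy1
        _ = 2 * N := by ring
  tfae_have 2 → 3 := by
    rintro ⟨E, h1, h2, C, hC⟩
    exact ⟨E, h1, h2, fun x hx => ⟨C, fun g hg => hC x hx g hg⟩⟩
  tfae_have 3 → 2 := by
    rintro ⟨E, hE, hEpos, hC⟩
    set S : ℕ → Set X := fun N => E ∩ ⋂ g : G, {x | g⁻¹ • x ∈ E → ‖b x g‖ ≤ (N : ℝ)} with hSdef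
    have hSm : ∀ N, MeasurableSet (S N) := by
      intro N
      refine hE.inter (MeasurableSet.iInter fun g => ?_)
      have : {x | g⁻¹ • x ∈ E → ‖b x g‖ ≤ (N : ℝ)}
          = {x | g⁻¹ • x ∈ E}ᶜ ∪ {x | ‖b x g‖ ≤ (N : ℝ)} := by
        ext x; simp [imp_iff_not_or]
      rw [this]
      exact ((hmeas g⁻¹ hE).compl).union (measurableSet_le (hb.1 g).norm measurable_const)
    obtain ⟨N, hN⟩ : ∃ N : ℕ, μ (S N) ≠ 0 := by
      by_contra h
      push_neg at h
      have hcover : E ⊆ ⋃ N : ℕ, S N := by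
        intro x hx
        obtain ⟨Cx, hCx⟩ := hC x hx
        obtain ⟨N, hNx⟩ := exists_nat_ge Cx
        refine Set.mem_iUnion.2 ⟨N, hx, Set.mem_iInter.2 fun g => ?_⟩
        intro hg
        exact (hCx g hg).trans hNx
      have := (measure_mono hcover).trans_eq (measure_iUnion_null h)
      exact absurd (le_antisymm this zero_le) hEpos.ne'
    refine ⟨S N, hSm N, pos_iff_ne_zero.2 hN, N, ?_⟩
    rintro x hx g hg
    simp only [hSdef] at hx hg
    exact Set.mem_iInter.1 hx.2 g hg.1
  tfae_have 2 → 1 := by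
    rintro ⟨E, hE, hEpos, C0, hC0⟩
    obtain ⟨e, he⟩ := exists_surjective_nat G
    have : Nonempty K := ⟨0⟩
    obtain ⟨d, hd⟩ := TopologicalSpace.exists_dense_seq K
    set C : ℝ := max C0 0 with hCdef
    have hC : ∀ x ∈ E, ∀ g : G, g⁻¹ • x ∈ E → ‖b x g‖ ≤ C :=
      fun x hx g hg => (hC0 x hx g hg).trans (le_max_left _ _)
    have hC0' : (0 : ℝ) ≤ C := le_max_right _ _
    -- the saturation W of E
    set W : Set X := ⋃ n : ℕ, (fun x => (e n)⁻¹ • x) ⁻¹' E with hWdef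
    have hWm : MeasurableSet W := MeasurableSet.iUnion fun n => hmeas (e n)⁻¹ hE
    have hWiff : ∀ x, x ∈ W ↔ ∃ g : G, g⁻¹ • x ∈ E := by
      intro x
      rw [hWdef]
      simp only [Set.mem_iUnion, Set.mem_preimage]
      constructor
      · rintro ⟨n, h⟩; exact ⟨e n, h⟩
      · rintro ⟨g, h⟩; obtain ⟨n, rfl⟩ := he g; exact ⟨n, h⟩
    have hWsmul : ∀ (g : G) (x : X), x ∈ W → g • x ∈ W := by
      intro g x hx
      obtain ⟨h, hh⟩ := (hWiff x).1 hx
      refine (hWiff _).2 ⟨g * h, ?_⟩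
      rw [mul_inv_rev, mul_smul, inv_smul_smul]
      exact hh
    have hWconull : ∀ᵐ x ∂μ, x ∈ W := by
      have hfix : ∀ g : G, g • W = W := by
        intro g
        apply Set.Subset.antisymm
        · rintro y ⟨x, hx, rfl⟩
          exact hWsmul g x hx
        · intro y hy
          exact ⟨g⁻¹ • y, hWsmul g⁻¹ y hy, smul_inv_smul g y⟩
      have := herg W hWm fun g => by rw [hfix g, symmDiff_self]; simp
      have hEW : E ⊆ W := fun x hx => (hWiff x).2 ⟨1, by simpa using hx⟩
      rcases this with h0 | h1
      · exact absurd (le_antisymm (h0 ▸ measure_mono hEW) zero_le) hEpos.ne'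
      · have : μ Wᶜ = 0 := by
          rw [measure_compl hWm (measure_ne_top μ W), h1, measure_univ]
          simp
        rw [ae_iff]
        exact this
    -- choice of a group element bringing a point of W into E
    have hex : ∀ x : X, ∃ n : ℕ, (e n)⁻¹ • x ∈ E ∨ x ∉ W := by
      intro x
      by_cases hx : x ∈ W
      · obtain ⟨g, hg⟩ := (hWiff x).1 hx
        obtain ⟨n, rfl⟩ := he g
        exact ⟨n, Or.inl hg⟩
      · exact ⟨0, Or.inr hx⟩
    have hfindm : Measurable fun x => Nat.find (hex x) := by
      apply meas_nat_find (p := fun x n => (e n)⁻¹ • x ∈ E ∨ x ∉ W)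
      intro n
      have : {x | (e n)⁻¹ • x ∈ E ∨ x ∉ W} = ((fun x => (e n)⁻¹ • x) ⁻¹' E) ∪ Wᶜ := by
        ext x; simp [Set.mem_preimage]
      rw [this]
      exact (hmeas (e n)⁻¹ hE).union hWm.compl
    set γ : X → G := fun x => e (Nat.find (hex x)) with hγdef
    have hγE : ∀ x ∈ W, (γ x)⁻¹ • x ∈ E := by
      intro x hx
      have := Nat.find_spec (hex x)
      rcases this with h | h
      · exact h
      · exact absurd hx h
    set ξ : X → K := fun x => b x (γ x) with hξdef
    have hξm : Measurable ξ :=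
      meas_nat_select (F := fun n x => b x (e n)) (fun n => hb.1 (e n)) hfindm
    -- the auxiliary cocycle c
    set c : X → G → K := fun x g => b x g - ξ x + L x g (ξ (g⁻¹ • x)) with hcdef
    have hcm : ∀ g : G, Measurable fun x => c x g := fun g =>
      ((hb.1 g).sub hξm).add
        (meas_L_comp (fun x => L x g) (hL.1 g) (hξm.comp (hmeas g⁻¹)))
    -- the conull set of pointwise algebraic identities
    set P : X → Prop := fun x =>
      (∀ g₁ g₂ : G, b x (g₁ * g₂) = b x g₁ + L x g₁ (b (g₁⁻¹ • x) g₂)) ∧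
      (∀ g₁ g₂ : G, ∀ v : K, L x (g₁ * g₂) v = L x g₁ (L (g₁⁻¹ • x) g₂ v)) ∧ x ∈ W
      with hPdef
    have hP : ∀ᵐ x ∂μ, P x := by
      rw [hPdef]
      have h1 : ∀ᵐ x ∂μ, ∀ g₁ g₂ : G, b x (g₁ * g₂) = b x g₁ + L x g₁ (b (g₁⁻¹ • x) g₂) :=
        ae_all_iff.2 fun g₁ => ae_all_iff.2 fun g₂ => hb.2 g₁ g₂
      have h2 : ∀ᵐ x ∂μ, ∀ g₁ g₂ : G, ∀ v : K, L x (g₁ * g₂) v = L x g₁ (L (g₁⁻¹ • x) g₂ v) :=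
        ae_all_iff.2 fun g₁ => ae_all_iff.2 fun g₂ => hL.2 g₁ g₂
      filter_upwards [h1, h2, hWconull] with x a1 a2 a3
      exact ⟨a1, a2, a3⟩
    -- c is an exact cocycle on P
    have hckey : ∀ x, P x → ∀ g h : G, c x (g * h) = c x g + L x g (c (g⁻¹ • x) h) := by
      rintro x ⟨hbx, hLx, -⟩ g h
      have e1 : (g * h)⁻¹ • x = h⁻¹ • (g⁻¹ • x) := by rw [mul_inv_rev, mul_smul]
      simp only [hcdef]
      rw [hbx g h, hLx g h (ξ ((g * h)⁻¹ • x)), e1]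
      simp only [map_add, map_sub]
      abel
    -- c is bounded by C on P
    have hcbd : ∀ x, P x → ∀ g : G, ‖c x g‖ ≤ C := by
      rintro x ⟨hbx, hLx, hxW⟩ g
      have hgW : g⁻¹ • x ∈ W := hWsmul g⁻¹ x hxW
      have haE : (γ x)⁻¹ • x ∈ E := hγE x hxW
      have ha'E : (γ (g⁻¹ • x))⁻¹ • (g⁻¹ • x) ∈ E := hγE _ hgW
      set a := γ x
      set a' := γ (g⁻¹ • x)
      have h1 : b x (g * a') = b x g + L x g (b (g⁻¹ • x) a') := hbx g a'
      have hc1 : c x g = b x (g * a') - b x a := by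
        simp only [hcdef, hξdef]
        rw [h1]
        abel
      have h2 := hbx a (a⁻¹ * (g * a'))
      have h3 : a * (a⁻¹ * (g * a')) = g * a' := by group
      rw [h3] at h2
      have hc2 : c x g = L x a (b (a⁻¹ • x) (a⁻¹ * (g * a'))) := by
        rw [hc1, h2]
        abel
      rw [hc2, LinearIsometryEquiv.norm_map]
      apply hC _ haE
      have h4 : (a⁻¹ * (g * a'))⁻¹ • (a⁻¹ • x) = a'⁻¹ • (g⁻¹ • x) := by
        rw [smul_smul, smul_smul]
        congr 1
        group
      rw [h4]
      exact ha'E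
    -- truncation of c, globally bounded
    set c' : X → G → K := fun x g => if ‖c x g‖ ≤ C then c x g else 0 with hc'def
    have hc'm : ∀ g : G, Measurable fun x => c' x g := by
      intro g
      simp only [hc'def]
      exact Measurable.ite (measurableSet_le (hcm g).norm measurable_const)
        (hcm g) measurable_const
    have hc'bd : ∀ x, ∀ g : G, ‖c' x g‖ ≤ C := by
      intro x g
      simp only [hc'def]
      split_ifs with h
      · exact h
      · simpa using hC0'
    have hc'eq : ∀ x, P x → ∀ g : G, c' x g = c x g := by
      intro x hx g
      simp only [hc'def]
      exact if_pos (hcbd x hx g)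
    -- Chebyshev radius machinery
    set R : X → K → ℝ := fun x z => ⨆ g : G, ‖z - c' x g‖ with hRdef
    have hRm : ∀ z : K, Measurable fun x => R x z := by
      intro z
      simp only [hRdef]
      exact Measurable.iSup fun g => (measurable_const.sub (hc'm g)).norm
    set ρ : X → ℝ := fun x => ⨅ k : ℕ, R x (d k) with hρdef
    have hρm : Measurable ρ := Measurable.iInf fun k => hRm (d k)
    have hρ0 : ∀ x, 0 ≤ ρ x := fun x => chebρ_nonneg (hc'bd x)
    have hρleR : ∀ x (z : K), ρ x ≤ R x z := fun x z => chebρ_le_chebR hd (hc'bd x) z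
    -- approximate Chebyshev centers, selected measurably
    have hsel : ∀ (x : X) (n : ℕ), ∃ k : ℕ, R x (d k) < ρ x + 1 / (n + 1) := by
      intro x n
      apply exists_lt_of_ciInf_lt (f := fun k : ℕ => R x (d k))
      show ρ x < ρ x + 1 / (n + 1)
      have : (0 : ℝ) < 1 / (n + 1) := by positivity
      linarith
    set sel : ℕ → X → K := fun n x => d (Nat.find (hsel x n)) with hseldef
    have hselm : ∀ n, Measurable (sel n) := by
      intro n
      apply Measurable.comp (measurable_from_top (f := d))
      exact meas_nat_find (fun k =>
        measurableSet_lt (hRm (d k)) (hρm.add measurable_const)) _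
    have hselspec : ∀ n x, R x (sel n x) < ρ x + 1 / (n + 1) :=
      fun n x => Nat.find_spec (hsel x n)
    -- the selection is Cauchy at every point
    have hcauchy : ∀ x, CauchySeq fun n => sel n x := by
      intro x
      apply cauchySeq_of_le_tendsto_0
        (b := fun N : ℕ => Real.sqrt (4 * (1 / (N + 1)) * (2 * ρ x + 1)))
      · intro n m N hn hm
        have hNn : (1 : ℝ) / (n + 1) ≤ 1 / (N + 1) := by
          apply one_div_le_one_div_of_le
          · positivity
          · have : (N : ℝ) ≤ n := Nat.cast_le.2 hn
            linarith
        have hNm : (1 : ℝ) / (m + 1) ≤ 1 / (N + 1) := by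
          apply one_div_le_one_div_of_le
          · positivity
          · have : (N : ℝ) ≤ m := Nat.cast_le.2 hm
            linarith
        have hεpos : (0 : ℝ) < 1 / (N + 1) := by positivity
        have hε1 : (1 : ℝ) / (N + 1) ≤ 1 := by
          rw [div_le_one (by positivity)]
          have : (0 : ℝ) ≤ N := Nat.cast_nonneg N
          linarith
        have h1 : R x (sel n x) ≤ ρ x + 1 / (N + 1) :=
          (hselspec n x).le.trans (by linarith)
        have h2 : R x (sel m x) ≤ ρ x + 1 / (N + 1) :=
          (hselspec m x).le.trans (by linarith)
        have key : ‖sel n x - sel m x‖ ^ 2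
            ≤ 4 * (1 / (N + 1)) * (2 * ρ x + 1 / (N + 1)) :=
          cheb_key hd (hc'bd x) hεpos.le h1 h2
        rw [dist_eq_norm, ← Real.sqrt_sq (norm_nonneg (sel n x - sel m x))]
        apply Real.sqrt_le_sqrt
        have hρx := hρ0 x
        nlinarith [key]
      · have hinner : Tendsto (fun N : ℕ => 4 * (1 / ((N : ℝ) + 1)) * (2 * ρ x + 1))
            atTop (𝓝 0) := by
          have h0 : Tendsto (fun N : ℕ => 1 / ((N : ℝ) + 1)) atTop (𝓝 0) :=
            tendsto_one_div_add_atTop_nhds_zero_nat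
          have h1 := (h0.const_mul 4).mul_const (2 * ρ x + 1)
          simpa using h1
        have h2 := (Real.continuous_sqrt.tendsto 0).comp hinner
        rw [Real.sqrt_zero] at h2
        exact h2
    -- the measurable limit η
    obtain ⟨η, hηm, hηt⟩ := measurable_limit_of_tendsto_metrizable_ae (L := atTop)
      (μ := μ) (f := fun n x => sel n x)
      (fun n => (hselm n).aemeasurable)
      (Eventually.of_forall fun x => cauchySeq_tendsto_of_complete (hcauchy x))
    -- the conull good set
    set Q : X → Prop := fun x => P x ∧ Tendsto (fun n => sel n x) atTop (𝓝 (η x))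
      with hQdef
    have hQ : ∀ᵐ x ∂μ, Q x := by
      filter_upwards [hP, hηt] with x h1 h2
      exact ⟨h1, h2⟩
    have hηR : ∀ x, Q x → R x (η x) ≤ ρ x := by
      rintro x ⟨-, hxt⟩
      refine ciSup_le fun g => ?_
      have ht : Tendsto (fun n => ‖sel n x - c' x g‖) atTop (𝓝 ‖η x - c' x g‖) :=
        (hxt.sub tendsto_const_nhds).norm
      have hv : Tendsto (fun n : ℕ => ρ x + 1 / ((n : ℝ) + 1)) atTop (𝓝 (ρ x)) := by
        have := tendsto_const_nhds (x := ρ x) (f := atTop (α := ℕ))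
          |>.add tendsto_one_div_add_atTop_nhds_zero_nat
        simpa using this
      refine le_of_tendsto_of_tendsto' ht hv fun n => ?_
      exact (le_chebR (hc'bd x) (sel n x) g).trans (hselspec n x).le
    -- conclusion: ξ + η is the desired primitive
    refine ⟨fun x => ξ x + η x, hξm.add hηm, fun g => ?_⟩
    filter_upwards [hQ, hae_smul g⁻¹ Q hQ] with x hQx hQgx
    -- notation
    have hreidx : ∀ z : K,
        R x (c x g + L x g z) = R (g⁻¹ • x) z := by
      intro z
      have hrange : (Set.range fun h : G => ‖(c x g + L x g z) - c' x h‖)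
          = Set.range fun h : G => ‖z - c' (g⁻¹ • x) h‖ := by
        have hsurj : Function.Surjective fun h : G => g * h :=
          (Equiv.mulLeft g).surjective
        rw [← hsurj.range_comp (g := fun h : G => ‖(c x g + L x g z) - c' x h‖)]
        have hfuneq : ((fun h : G => ‖(c x g + L x g z) - c' x h‖) ∘ fun h : G => g * h)
            = fun h : G => ‖z - c' (g⁻¹ • x) h‖ := by
          funext h
          show ‖(c x g + L x g z) - c' x (g * h)‖ = ‖z - c' (g⁻¹ • x) h‖
          rw [hc'eq x hQx.1, hc'eq _ hQgx.1, hckey x hQx.1 g h]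
          have heq2 : c x g + L x g z - (c x g + L x g (c (g⁻¹ • x) h))
              = L x g (z - c (g⁻¹ • x) h) := by
            rw [map_sub]
            abel
          rw [heq2, LinearIsometryEquiv.norm_map]
        rw [hfuneq]
      show (⨆ h : G, ‖(c x g + L x g z) - c' x h‖) = ⨆ h : G, ‖z - c' (g⁻¹ • x) h‖
      rw [← sSup_range, ← sSup_range, hrange]
    have hρeq : ρ x = ρ (g⁻¹ • x) := by
      apply le_antisymm
      · refine le_ciInf fun k => ?_
        have h1 := hρleR x (c x g + L x g (d k))
        rwa [hreidx (d k)] at h1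
      · refine le_ciInf fun k => ?_
        have h1 := hρleR (g⁻¹ • x) ((L x g).symm (d k - c x g))
        have h2 : c x g + L x g ((L x g).symm (d k - c x g)) = d k := by
          rw [LinearIsometryEquiv.apply_symm_apply]
          abel
        rwa [← hreidx ((L x g).symm (d k - c x g)), h2] at h1
    have hp : R x (c x g + L x g (η (g⁻¹ • x))) ≤ ρ x := by
      rw [hreidx (η (g⁻¹ • x)), hρeq]
      exact hηR _ hQgx
    have hη : R x (η x) ≤ ρ x := hηR x hQx
    have huniq : η x = c x g + L x g (η (g⁻¹ • x)) :=
      cheb_unique hd (hc'bd x) hη hp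
    -- unfold and rearrange
    have hcval : c x g = η x - L x g (η (g⁻¹ • x)) := by
      rw [huniq]
      abel
    show b x g = (ξ x + η x) - L x g (ξ (g⁻¹ • x) + η (g⁻¹ • x))
    rw [map_add]
    have hfin : ∀ u a b' ee f : K, u - a + b' = ee - f → u = (a + ee) - (b' + f) := by
      intro u a b' ee f hh
      have hee : ee = u - a + b' + f := by rw [← sub_eq_iff_eq_add]; exact hh.symm
      rw [hee]
      abel
    exact hfin (b x g) (ξ x) (L x g (ξ (g⁻¹ • x))) (η x) (L x g (η (g⁻¹ • x))) hcval

  tfae_finish
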